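/- For all natural numbers h ≤ k: if A is a formula of L0 with lev(A) = h and the sequent Γ, A' has a cut-free derivation in M^Ω_k, then the sequent Γ, A also has a cut-free derivation in M^Ω_k. -/

import Mathlib

namespace OneVarMu

/-- Operator forms of the language `L_Ω` (one fixed variable `X`, written `var`).
`nut` is the auxiliary fixed-point connective `ν̃`; `L0` operator forms are the
`nut`-free ones. -/
inductive Form : Type
  | atom  : ℕ → Form          -- p_i
  | natom : ℕ → Form          -- p̄_i
  | var   : Form              -- X
  | and   : Form → Form → Form
  | or    : Form → Form → Form
  | box   : Form → Form
  | dia   : Form → Form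
  | mu    : Form → Form       -- μX.A
  | nu    : Form → Form       -- νX.A
  | nut   : Form → Form       -- ν̃X.A
  deriving DecidableEq

namespace Form

/-- Negation `¬A` (on `ν̃` we extend the `L0` definition as for `ν`). -/
def compl : Form → Form
  | atom i  => natom i
  | natom i => atom i
  | var     => var
  | and A B => or (compl A) (compl B)
  | or A B  => and (compl A) (compl B)
  | box A   => dia (compl A)
  | dia A   => box (compl A)
  | mu A    => nu (compl A)
  | nu A    => mu (compl A)
  | nut A   => mu (compl A)

/-- `subst A B` is `A(B)`: substitute `B` for every free occurrence of `X` in `A`. -/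
def subst : Form → Form → Form
  | atom i, _  => atom i
  | natom i, _ => natom i
  | var, B     => B
  | and A1 A2, B => and (subst A1 B) (subst A2 B)
  | or A1 A2, B  => or (subst A1 B) (subst A2 B)
  | box A, B   => box (subst A B)
  | dia A, B   => dia (subst A B)
  | mu A, _    => mu A
  | nu A, _    => nu A
  | nut A, _   => nut A

/-- The level of an operator form: maximal nesting of fixed-point operators. -/
def lev : Form → ℕ
  | atom _  => 0
  | natom _ => 0
  | var     => 0
  | and A B => max (lev A) (lev B)
  | or A B  => max (lev A) (lev B)
  | box A   => lev A
  | dia A   => lev A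
  | mu A    => lev A + 1
  | nu A    => lev A + 1
  | nut A   => lev A + 1

/-- `A'`: replace every occurrence of `νX` by `ν̃X`. -/
def prime : Form → Form
  | atom i  => atom i
  | natom i => natom i
  | var     => var
  | and A B => and (prime A) (prime B)
  | or A B  => or (prime A) (prime B)
  | box A   => box (prime A)
  | dia A   => dia (prime A)
  | mu A    => mu (prime A)
  | nu A    => nut (prime A)
  | nut A   => nut (prime A)

/-- `A` is an operator form of `L0`, i.e. contains no `ν̃`. -/
def IsL0 : Form → Prop
  | and A B => IsL0 A ∧ IsL0 B
  | or A B  => IsL0 A ∧ IsL0 B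
  | box A   => IsL0 A
  | dia A   => IsL0 A
  | mu A    => IsL0 A
  | nu A    => IsL0 A
  | nut _   => False
  | _       => True

/-- `A` has no free occurrence of the variable `X`, i.e. `A` is a formula. -/
def ClosedF : Form → Prop
  | var     => False
  | and A B => ClosedF A ∧ ClosedF B
  | or A B  => ClosedF A ∧ ClosedF B
  | box A   => ClosedF A
  | dia A   => ClosedF A
  | _       => True

/-- `⊤ := p ∨ p̄` for a fixed atomic proposition. -/
def top : Form := or (atom 0) (natom 0)

/-- Finite iterations `A^i(⊤)`. -/
def iter (A : Form) : ℕ → Form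
  | 0     => top
  | n + 1 => subst A (iter A n)

/-- `OccursIn A B`: the operator form `A` occurs (as a subterm) in `B`. -/
def OccursIn (A : Form) : Form → Prop
  | atom i  => A = atom i
  | natom i => A = natom i
  | var     => A = var
  | and C D => A = and C D ∨ OccursIn A C ∨ OccursIn A D
  | or C D  => A = or C D ∨ OccursIn A C ∨ OccursIn A D
  | box C   => A = box C ∨ OccursIn A C
  | dia C   => A = dia C ∨ OccursIn A C
  | mu C    => A = mu C ∨ OccursIn A C
  | nu C    => A = nu C ∨ OccursIn A C
  | nut C   => A = nut C ∨ OccursIn A C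

/-- `replace t r A`: simultaneously replace every occurrence of `t` in `A` by `r`. -/
def replace (t r : Form) : Form → Form
  | and A B => if and A B = t then r else and (replace t r A) (replace t r B)
  | or A B  => if or A B = t then r else or (replace t r A) (replace t r B)
  | box A   => if box A = t then r else box (replace t r A)
  | dia A   => if dia A = t then r else dia (replace t r A)
  | mu A    => if mu A = t then r else mu (replace t r A)
  | nu A    => if nu A = t then r else nu (replace t r A)
  | nut A   => if nut A = t then r else nut (replace t r A)
  | A       => if A = t then r else A

end Form

/-- Sequents are finite sets of formulae. -/
abbrev Sequent := Finset Form

/-- Every member is a formula (no free `X`): a sequent of `L_Ω`. -/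
def ClosedSeq (Γ : Sequent) : Prop := ∀ C ∈ Γ, C.ClosedF

/-- A sequent of `L0`: every member is a `ν̃`-free formula. -/
def L0Seq (Γ : Sequent) : Prop := ∀ C ∈ Γ, C.IsL0 ∧ C.ClosedF

/-- `Γ` is `h`-positive: every `ν̃X.A` occurring in it has level `< h`. -/
def Positive (h : ℕ) (Γ : Sequent) : Prop :=
  ∀ C ∈ Γ, ∀ B : Form, Form.OccursIn (Form.nut B) C → Form.lev (Form.nut B) < h

/-- Every formula of the sequent has level `≤ k`. -/
def SeqLevLE (k : ℕ) (Γ : Sequent) : Prop := ∀ C ∈ Γ, C.lev ≤ k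

/-- The infinitary cut-free system `K_ω`. -/
inductive KDer : Sequent → Prop
  | ax (Γ : Sequent) (i : ℕ) :
      KDer (insert (Form.atom i) (insert (Form.natom i) Γ))
  | orR (Γ : Sequent) (A B : Form) :
      KDer (insert A (insert B Γ)) → KDer (insert (Form.or A B) Γ)
  | andR (Γ : Sequent) (A B : Form) :
      KDer (insert A Γ) → KDer (insert B Γ) → KDer (insert (Form.and A B) Γ)
  | boxR (Γ S : Sequent) (A : Form) :
      KDer (insert A Γ) → KDer (Γ.image Form.dia ∪ insert (Form.box A) S)
  | clo (Γ : Sequent) (A : Form) :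
      KDer (insert (Form.subst A (Form.mu A)) Γ) → KDer (insert (Form.mu A) Γ)
  | nuR (Γ : Sequent) (A : Form) :
      (∀ i : ℕ, KDer (insert (Form.iter A i) Γ)) → KDer (insert (Form.nu A) Γ)

/-- The finitary system `M` (with induction rule and cut). -/
inductive MDer : Sequent → Prop
  | ax (Γ : Sequent) (i : ℕ) :
      MDer (insert (Form.atom i) (insert (Form.natom i) Γ))
  | axMu (Γ : Sequent) (A : Form) :
      MDer (insert (Form.mu A) (insert (Form.compl (Form.mu A)) Γ))
  | orR (Γ : Sequent) (A B : Form) :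
      MDer (insert A (insert B Γ)) → MDer (insert (Form.or A B) Γ)
  | andR (Γ : Sequent) (A B : Form) :
      MDer (insert A Γ) → MDer (insert B Γ) → MDer (insert (Form.and A B) Γ)
  | boxR (Γ S : Sequent) (A : Form) :
      MDer (insert A Γ) → MDer (Γ.image Form.dia ∪ insert (Form.box A) S)
  | clo (Γ : Sequent) (A : Form) :
      MDer (insert (Form.subst A (Form.mu A)) Γ) → MDer (insert (Form.mu A) Γ)
  | ind (A B : Form) :
      MDer (insert (Form.compl (Form.subst A B)) {B}) →
      MDer (insert (Form.compl (Form.mu A)) {B})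
  | cut (Γ : Sequent) (A : Form) :
      A.IsL0 → A.ClosedF →
      MDer (insert A Γ) → MDer (insert (Form.compl A) Γ) → MDer Γ

/-- The finitary system `M`, with the extra recording that every sequent occurring
in the proof (i.e. the conclusion of every subderivation) has level `≤ k`. -/
inductive MDerB (k : ℕ) : Sequent → Prop
  | ax (Γ : Sequent) (i : ℕ) :
      SeqLevLE k (insert (Form.atom i) (insert (Form.natom i) Γ)) →
      MDerB k (insert (Form.atom i) (insert (Form.natom i) Γ))
  | axMu (Γ : Sequent) (A : Form) :
      SeqLevLE k (insert (Form.mu A) (insert (Form.compl (Form.mu A)) Γ)) →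
      MDerB k (insert (Form.mu A) (insert (Form.compl (Form.mu A)) Γ))
  | orR (Γ : Sequent) (A B : Form) :
      SeqLevLE k (insert (Form.or A B) Γ) →
      MDerB k (insert A (insert B Γ)) → MDerB k (insert (Form.or A B) Γ)
  | andR (Γ : Sequent) (A B : Form) :
      SeqLevLE k (insert (Form.and A B) Γ) →
      MDerB k (insert A Γ) → MDerB k (insert B Γ) → MDerB k (insert (Form.and A B) Γ)
  | boxR (Γ S : Sequent) (A : Form) :
      SeqLevLE k (Γ.image Form.dia ∪ insert (Form.box A) S) →
      MDerB k (insert A Γ) → MDerB k (Γ.image Form.dia ∪ insert (Form.box A) S)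
  | clo (Γ : Sequent) (A : Form) :
      SeqLevLE k (insert (Form.mu A) Γ) →
      MDerB k (insert (Form.subst A (Form.mu A)) Γ) → MDerB k (insert (Form.mu A) Γ)
  | ind (A B : Form) :
      SeqLevLE k (insert (Form.compl (Form.mu A)) {B}) →
      MDerB k (insert (Form.compl (Form.subst A B)) {B}) →
      MDerB k (insert (Form.compl (Form.mu A)) {B})
  | cut (Γ : Sequent) (A : Form) :
      A.IsL0 → A.ClosedF → SeqLevLE k Γ →
      MDerB k (insert A Γ) → MDerB k (insert (Form.compl A) Γ) → MDerB k Γ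

/-- Derivations of the system `M^Ω_k`, relative to a predicate `prev` expressing
cut-free derivability in `M^Ω_{k-1}`.  The boolean index is `true` if instances
of cut are allowed and `false` for cut-free derivations. -/
inductive OmDerAux (prev : Sequent → Prop) (k : ℕ) : Bool → Sequent → Prop
  | ax (c : Bool) (Γ : Sequent) (i : ℕ) :
      OmDerAux prev k c (insert (Form.atom i) (insert (Form.natom i) Γ))
  | orR (c : Bool) (Γ : Sequent) (A B : Form) :
      OmDerAux prev k c (insert A (insert B Γ)) →
      OmDerAux prev k c (insert (Form.or A B) Γ)
  | andR (c : Bool) (Γ : Sequent) (A B : Form) :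
      OmDerAux prev k c (insert A Γ) → OmDerAux prev k c (insert B Γ) →
      OmDerAux prev k c (insert (Form.and A B) Γ)
  | boxR (c : Bool) (Γ S : Sequent) (A : Form) :
      OmDerAux prev k c (insert A Γ) →
      OmDerAux prev k c (Γ.image Form.dia ∪ insert (Form.box A) S)
  | clo (c : Bool) (Γ : Sequent) (A : Form) :
      OmDerAux prev k c (insert (Form.subst A (Form.mu A)) Γ) →
      OmDerAux prev k c (insert (Form.mu A) Γ)
  | nuR (c : Bool) (Γ : Sequent) (A : Form) :
      (∀ i : ℕ, OmDerAux prev k c (insert (Form.iter A i) Γ)) →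
      OmDerAux prev k c (insert (Form.nu A) Γ)
  | cut (Γ : Sequent) (A : Form) :
      A.IsL0 → A.ClosedF → A.lev ≤ k →
      OmDerAux prev k true (insert (Form.prime A) Γ) →
      OmDerAux prev k true (insert (Form.prime (Form.compl A)) Γ) →
      OmDerAux prev k true Γ
  | omega (c : Bool) (Γ : Sequent) (A : Form) (h : ℕ) :
      1 ≤ h → h ≤ k → A.IsL0 →
      Form.lev (Form.prime (Form.compl (Form.mu A))) = h →
      (∀ Δ : Sequent, ClosedSeq Δ → Positive h Δ →
        prev (insert (Form.prime (Form.mu A)) Δ) → OmDerAux prev k c (Δ ∪ Γ)) →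
      OmDerAux prev k c (insert (Form.prime (Form.compl (Form.mu A))) Γ)
  | omegaT (c : Bool) (Γ : Sequent) (A : Form) (h : ℕ) :
      1 ≤ h → h ≤ k → A.IsL0 →
      Form.lev (Form.prime (Form.compl (Form.mu A))) = h →
      OmDerAux prev k c (insert (Form.prime (Form.mu A)) Γ) →
      (∀ Δ : Sequent, ClosedSeq Δ → Positive h Δ →
        prev (insert (Form.prime (Form.mu A)) Δ) → OmDerAux prev k c (Δ ∪ Γ)) →
      OmDerAux prev k c Γ

/-- `OmProv k c Γ`: the sequent `Γ` is derivable in `M^Ω_k`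
(cut-free when `c = false`). -/
def OmProv : ℕ → Bool → Sequent → Prop
  | 0     => OmDerAux (fun _ => False) 0
  | k + 1 => OmDerAux (fun Δ => OmProv k false Δ) (k + 1)


/-! ### Auxiliary lemmas on forms -/

namespace Form

/-- Erase primes: replace `ν̃` by `ν` everywhere. -/
def unprime : Form → Form
  | atom i  => atom i
  | natom i => natom i
  | var     => var
  | and A B => and (unprime A) (unprime B)
  | or A B  => or (unprime A) (unprime B)
  | box A   => box (unprime A)
  | dia A   => dia (unprime A)
  | mu A    => mu (unprime A)
  | nu A    => nu (unprime A)
  | nut A   => nu (unprime A)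

@[simp] lemma lev_compl (A : Form) : A.compl.lev = A.lev := by
  induction A <;> simp [compl, lev, *]

@[simp] lemma lev_prime (A : Form) : A.prime.lev = A.lev := by
  induction A <;> simp [prime, lev, *]

lemma isL0_compl {A : Form} (h : A.IsL0) : A.compl.IsL0 := by
  induction A <;> simp_all [compl, IsL0]

lemma isL0_subst {A B : Form} (hA : A.IsL0) (hB : B.IsL0) : (A.subst B).IsL0 := by
  induction A <;> simp_all [subst, IsL0]

lemma closedF_subst {A B : Form} (hB : B.ClosedF) : (A.subst B).ClosedF := by
  induction A <;> simp_all [subst, ClosedF]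

lemma prime_subst (A B : Form) : (A.subst B).prime = A.prime.subst B.prime := by
  induction A <;> simp [subst, prime, *]

lemma lev_subst_le (A B : Form) : (A.subst B).lev ≤ max A.lev B.lev := by
  induction A <;> simp [subst, lev] <;> omega

@[simp] lemma isL0_top : (top : Form).IsL0 := by simp [top, IsL0]

@[simp] lemma closedF_top : (top : Form).ClosedF := by simp [top, ClosedF]

@[simp] lemma lev_top : (top : Form).lev = 0 := by simp [top, lev]

lemma lev_iter_le (A : Form) (i : ℕ) : (iter A i).lev ≤ A.lev := by
  induction i with
  | zero => simp [iter]
  | succ n ih => have := lev_subst_le A (iter A n); simp [iter]; omega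

lemma isL0_iter {A : Form} (hA : A.IsL0) (i : ℕ) : (iter A i).IsL0 := by
  induction i with
  | zero => simpa [iter] using isL0_top
  | succ n ih => exact isL0_subst hA ih

lemma closedF_iter (A : Form) (i : ℕ) : (iter A i).ClosedF := by
  induction i with
  | zero => simpa [iter] using closedF_top
  | succ n ih => exact closedF_subst ih

lemma closedF_prime {A : Form} (h : A.ClosedF) : A.prime.ClosedF := by
  induction A <;> simp_all [prime, ClosedF]

lemma compl_compl {A : Form} (h : A.IsL0) : A.compl.compl = A := by
  induction A <;> simp_all [compl, IsL0]

lemma unprime_prime {A : Form} (h : A.IsL0) : A.prime.unprime = A := by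
  induction A <;> simp_all [prime, unprime, IsL0]

lemma prime_inj {A B : Form} (hA : A.IsL0) (hB : B.IsL0) (h : A.prime = B.prime) :
    A = B := by
  have := congrArg unprime h
  rwa [unprime_prime hA, unprime_prime hB] at this

lemma occursIn_lev_le : ∀ {C B : Form}, OccursIn B C → B.lev ≤ C.lev := by
  intro C
  induction C with
  | atom i => intro B h; simp [OccursIn] at h; subst h; simp
  | natom i => intro B h; simp [OccursIn] at h; subst h; simp
  | var => intro B h; simp [OccursIn] at h; subst h; simp
  | and C D ihC ihD =>
      intro B h
      rcases h with h | h | h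
      · subst h; exact le_rfl
      · have := ihC h; simp [lev]; omega
      · have := ihD h; simp [lev]; omega
  | or C D ihC ihD =>
      intro B h
      rcases h with h | h | h
      · subst h; exact le_rfl
      · have := ihC h; simp [lev]; omega
      · have := ihD h; simp [lev]; omega
  | box C ihC =>
      intro B h
      rcases h with h | h
      · subst h; exact le_rfl
      · have := ihC h; simp [lev]; omega
  | dia C ihC =>
      intro B h
      rcases h with h | h
      · subst h; exact le_rfl
      · have := ihC h; simp [lev]; omega
  | mu C ihC =>
      intro B h
      rcases h with h | h
      · subst h; exact le_rfl
      · have := ihC h; simp [lev]; omega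
  | nu C ihC =>
      intro B h
      rcases h with h | h
      · subst h; exact le_rfl
      · have := ihC h; simp [lev]; omega
  | nut C ihC =>
      intro B h
      rcases h with h | h
      · subst h; exact le_rfl
      · have := ihC h; simp [lev]; omega

lemma occursIn_nut_subst {E A B : Form} :
    OccursIn (nut E) (A.subst B) → OccursIn (nut E) A ∨ OccursIn (nut E) B := by
  induction A with
  | atom i => intro h; simp [subst, OccursIn] at h
  | natom i => intro h; simp [subst, OccursIn] at h
  | var => intro h; exact Or.inr h
  | and A1 A2 ih1 ih2 =>
      intro h
      rcases h with h | h | h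
      · simp at h
      · rcases ih1 h with h | h
        · exact Or.inl (Or.inr (Or.inl h))
        · exact Or.inr h
      · rcases ih2 h with h | h
        · exact Or.inl (Or.inr (Or.inr h))
        · exact Or.inr h
  | or A1 A2 ih1 ih2 =>
      intro h
      rcases h with h | h | h
      · simp at h
      · rcases ih1 h with h | h
        · exact Or.inl (Or.inr (Or.inl h))
        · exact Or.inr h
      · rcases ih2 h with h | h
        · exact Or.inl (Or.inr (Or.inr h))
        · exact Or.inr h
  | box A ih =>
      intro h
      rcases h with h | h
      · simp at h
      · rcases ih h with h | h
        · exact Or.inl (Or.inr h)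
        · exact Or.inr h
  | dia A ih =>
      intro h
      rcases h with h | h
      · rcases h
      · rcases ih h with h | h
        · exact Or.inl (Or.inr h)
        · exact Or.inr h
  | mu A ih => intro h; exact Or.inl h
  | nu A ih => intro h; exact Or.inl h
  | nut A ih => intro h; exact Or.inl h

lemma occursIn_nut_iter {E A : Form} {i : ℕ} :
    OccursIn (nut E) (iter A i) → OccursIn (nut E) A := by
  induction i with
  | zero => intro h; simp [iter, top, OccursIn] at h
  | succ n ih =>
      intro h
      rcases occursIn_nut_subst h with h | h
      · exact h
      · exact ih h

end Form


/-! ### Positivity and closedness helpers -/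

/-- All `ν̃`-subterms of a single formula have level `< h`. -/
def PosF (h : ℕ) (A : Form) : Prop :=
  ∀ E : Form, Form.OccursIn (Form.nut E) A → Form.lev (Form.nut E) < h

lemma positive_def {h : ℕ} {Γ : Sequent} :
    Positive h Γ ↔ ∀ C ∈ Γ, PosF h C := Iff.rfl

lemma positive_mono {h h' : ℕ} {Γ : Sequent} (hh : h ≤ h') (H : Positive h Γ) :
    Positive h' Γ :=
  fun C hC B hB => lt_of_lt_of_le (H C hC B hB) hh

lemma posF_mono {h h' : ℕ} {A : Form} (hh : h ≤ h') (H : PosF h A) : PosF h' A :=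
  fun E hE => lt_of_lt_of_le (H E hE) hh

lemma posF_of_lev_lt {h : ℕ} {A : Form} (hA : A.lev < h) : PosF h A :=
  fun _ hE => lt_of_le_of_lt (Form.occursIn_lev_le hE) hA

lemma posF_and_left {h : ℕ} {A B : Form} (H : PosF h (Form.and A B)) : PosF h A :=
  fun E hE => H E (Or.inr (Or.inl hE))

lemma posF_and_right {h : ℕ} {A B : Form} (H : PosF h (Form.and A B)) : PosF h B :=
  fun E hE => H E (Or.inr (Or.inr hE))

lemma posF_or_left {h : ℕ} {A B : Form} (H : PosF h (Form.or A B)) : PosF h A :=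
  fun E hE => H E (Or.inr (Or.inl hE))

lemma posF_or_right {h : ℕ} {A B : Form} (H : PosF h (Form.or A B)) : PosF h B :=
  fun E hE => H E (Or.inr (Or.inr hE))

lemma posF_box {h : ℕ} {A : Form} (H : PosF h (Form.box A)) : PosF h A :=
  fun E hE => H E (Or.inr hE)

lemma posF_dia' {h : ℕ} {A : Form} (H : PosF h (Form.dia A)) : PosF h A :=
  fun E hE => H E (Or.inr hE)

lemma posF_dia_of {h : ℕ} {A : Form} (H : PosF h A) : PosF h (Form.dia A) := by
  intro E hE
  rcases hE with hE | hE
  · cases hE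
  · exact H E hE

lemma posF_mu {h : ℕ} {A : Form} (H : PosF h (Form.mu A)) : PosF h A :=
  fun E hE => H E (Or.inr hE)

lemma posF_nu {h : ℕ} {A : Form} (H : PosF h (Form.nu A)) : PosF h A :=
  fun E hE => H E (Or.inr hE)

lemma posF_subst {h : ℕ} {A B : Form} (hA : PosF h A) (hB : PosF h B) :
    PosF h (A.subst B) := by
  intro E hE
  rcases Form.occursIn_nut_subst hE with hE | hE
  · exact hA E hE
  · exact hB E hE

lemma posF_clo {h : ℕ} {A : Form} (H : PosF h (Form.mu A)) :
    PosF h (A.subst (Form.mu A)) :=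
  posF_subst (posF_mu H) H

lemma posF_iter {h : ℕ} {A : Form} (H : PosF h A) (i : ℕ) :
    PosF h (Form.iter A i) :=
  fun E hE => H E (Form.occursIn_nut_iter hE)

/-- `PosF` for a primed `μ`-formula. -/
lemma posF_prime_mu {h : ℕ} {A : Form} (hA : A.lev < h) :
    PosF h (Form.prime (Form.mu A)) := by
  intro E hE
  rcases hE with hE | hE
  · cases hE
  · calc Form.lev (Form.nut E) ≤ (Form.prime A).lev := Form.occursIn_lev_le hE
      _ < h := by simpa using hA

lemma positive_insert {h : ℕ} {A : Form} {Γ : Sequent}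
    (hA : PosF h A) (hΓ : Positive h Γ) : Positive h (insert A Γ) := by
  intro C hC
  rcases Finset.mem_insert.1 hC with rfl | hC
  · exact hA
  · exact hΓ C hC

lemma positive_insert_elim {h : ℕ} {A : Form} {Γ : Sequent}
    (H : Positive h (insert A Γ)) : PosF h A ∧ Positive h Γ :=
  ⟨H A (Finset.mem_insert_self _ _), fun C hC => H C (Finset.mem_insert_of_mem hC)⟩

lemma positive_union {h : ℕ} {Γ Δ : Sequent}
    (hΓ : Positive h Γ) (hΔ : Positive h Δ) : Positive h (Γ ∪ Δ) := by
  intro C hC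
  rcases Finset.mem_union.1 hC with hC | hC
  · exact hΓ C hC
  · exact hΔ C hC

lemma positive_singleton {h : ℕ} {A : Form} (hA : PosF h A) : Positive h ({A} : Sequent) := by
  intro C hC
  rcases Finset.mem_singleton.1 hC with rfl
  exact hA

lemma closedSeq_insert {A : Form} {Γ : Sequent}
    (hA : A.ClosedF) (hΓ : ClosedSeq Γ) : ClosedSeq (insert A Γ) := by
  intro C hC
  rcases Finset.mem_insert.1 hC with rfl | hC
  · exact hA
  · exact hΓ C hC

lemma closedSeq_insert_elim {A : Form} {Γ : Sequent}
    (H : ClosedSeq (insert A Γ)) : A.ClosedF ∧ ClosedSeq Γ :=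
  ⟨H A (Finset.mem_insert_self _ _), fun C hC => H C (Finset.mem_insert_of_mem hC)⟩

lemma closedSeq_union {Γ Δ : Sequent}
    (hΓ : ClosedSeq Γ) (hΔ : ClosedSeq Δ) : ClosedSeq (Γ ∪ Δ) := by
  intro C hC
  rcases Finset.mem_union.1 hC with hC | hC
  · exact hΓ C hC
  · exact hΔ C hC

lemma closedSeq_singleton {A : Form} (hA : A.ClosedF) : ClosedSeq ({A} : Sequent) := by
  intro C hC
  rcases Finset.mem_singleton.1 hC with rfl
  exact hA

/-! ### Inversion of `prime` -/

lemma prime_eq_atom {D : Form} {i : ℕ} (h : D.prime = Form.atom i) : D = Form.atom i := by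
  cases D <;> simp [Form.prime] at h <;> simp [h]

lemma prime_eq_natom {D : Form} {i : ℕ} (h : D.prime = Form.natom i) : D = Form.natom i := by
  cases D <;> simp [Form.prime] at h <;> simp [h]

lemma prime_eq_or {D F G : Form} (h : D.prime = Form.or F G) :
    ∃ D₁ D₂, D = Form.or D₁ D₂ ∧ D₁.prime = F ∧ D₂.prime = G := by
  cases D <;> simp [Form.prime] at h
  exact ⟨_, _, rfl, h.1, h.2⟩

lemma prime_eq_and {D F G : Form} (h : D.prime = Form.and F G) :
    ∃ D₁ D₂, D = Form.and D₁ D₂ ∧ D₁.prime = F ∧ D₂.prime = G := by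
  cases D <;> simp [Form.prime] at h
  exact ⟨_, _, rfl, h.1, h.2⟩

lemma prime_eq_box {D F : Form} (h : D.prime = Form.box F) :
    ∃ D₁, D = Form.box D₁ ∧ D₁.prime = F := by
  cases D <;> simp [Form.prime] at h
  exact ⟨_, rfl, h⟩

lemma prime_eq_dia {D F : Form} (h : D.prime = Form.dia F) :
    ∃ D₁, D = Form.dia D₁ ∧ D₁.prime = F := by
  cases D <;> simp [Form.prime] at h
  exact ⟨_, rfl, h⟩

lemma prime_eq_mu {D F : Form} (h : D.prime = Form.mu F) :
    ∃ D₁, D = Form.mu D₁ ∧ D₁.prime = F := by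
  cases D <;> simp [Form.prime] at h
  exact ⟨_, rfl, h⟩

lemma prime_ne_nu {D F : Form} (h : D.prime = Form.nu F) : False := by
  cases D <;> simp [Form.prime] at h

lemma prime_eq_nut {D F : Form} (hD : D.IsL0) (h : D.prime = Form.nut F) :
    ∃ D₁, D = Form.nu D₁ ∧ D₁.prime = F := by
  cases D <;> simp [Form.prime, Form.IsL0] at h hD
  · exact ⟨_, rfl, h⟩

/-! ### `prevOf` and weakening -/

/-- The previous-stage provability predicate used in `OmProv`. -/
def prevOf : ℕ → Sequent → Prop
  | 0 => fun _ => False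
  | k + 1 => OmProv k false

lemma omProv_def (k : ℕ) : OmProv k = OmDerAux (prevOf k) k := by
  cases k <;> rfl

lemma prevOf_succ (k : ℕ) : prevOf (k + 1) = OmDerAux (prevOf k) k false := by
  show OmProv k false = _
  rw [omProv_def]

lemma prevOf_eq_of_pos {n : ℕ} (hn : 1 ≤ n) :
    prevOf n = OmDerAux (prevOf (n - 1)) (n - 1) false := by
  cases n with
  | zero => omega
  | succ k => simpa using prevOf_succ k

/-- Weakening is admissible. -/
lemma weaken {prev : Sequent → Prop} {k : ℕ} {c : Bool} :
    ∀ {Θ : Sequent}, OmDerAux prev k c Θ → ∀ {Θ' : Sequent}, Θ ⊆ Θ' →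
      OmDerAux prev k c Θ' := by
  intro Θ hd
  induction hd with
  | ax c Γ i =>
      intro Θ' hsub
      have ha : Form.atom i ∈ Θ' := hsub (Finset.mem_insert_self _ _)
      have hb : Form.natom i ∈ Θ' :=
        hsub (Finset.mem_insert_of_mem (Finset.mem_insert_self _ _))
      have h2 := OmDerAux.ax (prev := prev) (k := k) c Θ' i
      rwa [Finset.insert_eq_self.2 hb, Finset.insert_eq_self.2 ha] at h2
  | orR c Γ A B hpr ih =>
      intro Θ' hsub
      have hm : Form.or A B ∈ Θ' := hsub (Finset.mem_insert_self _ _)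
      have hΓ : Γ ⊆ Θ' := (Finset.subset_insert _ _).trans hsub
      have h2 := OmDerAux.orR c Θ' A B
        (ih (Finset.insert_subset_insert _ (Finset.insert_subset_insert _ hΓ)))
      rwa [Finset.insert_eq_self.2 hm] at h2
  | andR c Γ A B hpa hpb iha ihb =>
      intro Θ' hsub
      have hm : Form.and A B ∈ Θ' := hsub (Finset.mem_insert_self _ _)
      have hΓ : Γ ⊆ Θ' := (Finset.subset_insert _ _).trans hsub
      have h2 := OmDerAux.andR c Θ' A B
        (iha (Finset.insert_subset_insert _ hΓ)) (ihb (Finset.insert_subset_insert _ hΓ))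
      rwa [Finset.insert_eq_self.2 hm] at h2
  | boxR c Γ S A hpr ih =>
      intro Θ' hsub
      have hbox : Form.box A ∈ Θ' :=
        hsub (Finset.mem_union_right _ (Finset.mem_insert_self _ _))
      have himg : Γ.image Form.dia ⊆ Θ' := Finset.Subset.trans Finset.subset_union_left hsub
      have h2 := OmDerAux.boxR (prev := prev) (k := k) c Γ Θ' A hpr
      rwa [Finset.insert_eq_self.2 hbox, Finset.union_eq_right.2 himg] at h2
  | clo c Γ A hpr ih =>
      intro Θ' hsub
      have hm : Form.mu A ∈ Θ' := hsub (Finset.mem_insert_self _ _)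
      have hΓ : Γ ⊆ Θ' := (Finset.subset_insert _ _).trans hsub
      have h2 := OmDerAux.clo c Θ' A (ih (Finset.insert_subset_insert _ hΓ))
      rwa [Finset.insert_eq_self.2 hm] at h2
  | nuR c Γ A hpr ih =>
      intro Θ' hsub
      have hm : Form.nu A ∈ Θ' := hsub (Finset.mem_insert_self _ _)
      have hΓ : Γ ⊆ Θ' := (Finset.subset_insert _ _).trans hsub
      have h2 := OmDerAux.nuR c Θ' A (fun i => ih i (Finset.insert_subset_insert _ hΓ))
      rwa [Finset.insert_eq_self.2 hm] at h2
  | cut Γ A hL0 hcl hlev hp1 hp2 ih1 ih2 =>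
      intro Θ' hsub
      exact OmDerAux.cut Θ' A hL0 hcl hlev
        (ih1 (Finset.insert_subset_insert _ hsub)) (ih2 (Finset.insert_subset_insert _ hsub))
  | omega c Γ A h h1 hk hL0 hlev hpr ih =>
      intro Θ' hsub
      have hm : Form.prime (Form.compl (Form.mu A)) ∈ Θ' := hsub (Finset.mem_insert_self _ _)
      have hΓ : Γ ⊆ Θ' := (Finset.subset_insert _ _).trans hsub
      have h2 := OmDerAux.omega c Θ' A h h1 hk hL0 hlev
        (fun Δ hc hp hpv => ih Δ hc hp hpv (Finset.union_subset_union_right hΓ))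
      rwa [Finset.insert_eq_self.2 hm] at h2
  | omegaT c Γ A h h1 hk hL0 hlev hp1 hpr ih1 ih =>
      intro Θ' hsub
      exact OmDerAux.omegaT c Θ' A h h1 hk hL0 hlev
        (ih1 (Finset.insert_subset_insert _ hsub))
        (fun Δ hc hp hpv => ih Δ hc hp hpv (Finset.union_subset_union_right hsub))


/-! ### Shifting the stage of a derivation of a positive sequent -/

lemma closedF_prime_mu (A : Form) : (Form.mu A).prime.ClosedF := by
  simp [Form.prime, Form.ClosedF]

lemma closedF_mu' (A : Form) : (Form.mu A).ClosedF := by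
  simp [Form.ClosedF]

lemma closedF_and_elim {A B : Form} (h : (Form.and A B).ClosedF) :
    A.ClosedF ∧ B.ClosedF := h

lemma closedF_or_elim {A B : Form} (h : (Form.or A B).ClosedF) :
    A.ClosedF ∧ B.ClosedF := h

lemma closedF_box_elim {A : Form} (h : (Form.box A).ClosedF) : A.ClosedF := h

lemma closedF_dia_elim {A : Form} (h : (Form.dia A).ClosedF) : A.ClosedF := h

lemma lev_prime_compl_mu {A : Form} {h : ℕ}
    (hlev : Form.lev (Form.prime (Form.compl (Form.mu A))) = h) :
    A.lev + 1 = h := by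
  simpa [Form.prime, Form.compl, Form.lev] using hlev

lemma posF_prime_compl_mu_self {A : Form} {b : ℕ}
    (H : PosF b (Form.prime (Form.compl (Form.mu A)))) :
    Form.lev A + 1 < b := by
  have := H (Form.prime A.compl) (Or.inl rfl)
  simpa [Form.lev] using this

/-- Conditions for the premise of `boxR` from conditions on its conclusion. -/
lemma boxR_premise_cond {b : ℕ} {Γ S : Sequent} {A : Form}
    (hcl : ClosedSeq (Γ.image Form.dia ∪ insert (Form.box A) S))
    (hpos : Positive b (Γ.image Form.dia ∪ insert (Form.box A) S)) :
    ClosedSeq (insert A Γ) ∧ Positive b (insert A Γ) := by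
  have hboxm : Form.box A ∈ Γ.image Form.dia ∪ insert (Form.box A) S :=
    Finset.mem_union_right _ (Finset.mem_insert_self _ _)
  constructor
  · intro C hC
    rcases Finset.mem_insert.1 hC with rfl | hC
    · exact closedF_box_elim (hcl _ hboxm)
    · exact closedF_dia_elim
        (hcl _ (Finset.mem_union_left _ (Finset.mem_image_of_mem _ hC)))
  · intro C hC
    rcases Finset.mem_insert.1 hC with rfl | hC
    · exact posF_box (hpos _ hboxm)
    · exact posF_dia' (hpos _ (Finset.mem_union_left _ (Finset.mem_image_of_mem _ hC)))

/-- Raising the stage by one, given lowering at the previous stage. -/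
lemma Rstep (n : ℕ)
    (Lih : ∀ (c : Bool) (Th : Sequent), OmDerAux (prevOf n) n c Th → c = false →
      ClosedSeq Th → Positive n Th → OmDerAux (prevOf (n - 1)) (n - 1) false Th) :
    ∀ (c : Bool) (Th : Sequent), OmDerAux (prevOf n) n c Th → c = false →
      ClosedSeq Th → Positive (n + 1) Th → OmDerAux (prevOf (n + 1)) (n + 1) false Th := by
  intro c Th d
  induction d with
  | ax c Γ i => intro _ _ _; exact OmDerAux.ax false Γ i
  | orR c Γ A B hp ih =>
      intro hc hcl hpos
      obtain ⟨hclA, hclΓ⟩ := closedSeq_insert_elim hcl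
      obtain ⟨hposA, hposΓ⟩ := positive_insert_elim hpos
      exact OmDerAux.orR false Γ A B (ih hc
        (closedSeq_insert (closedF_or_elim hclA).1
          (closedSeq_insert (closedF_or_elim hclA).2 hclΓ))
        (positive_insert (posF_or_left hposA)
          (positive_insert (posF_or_right hposA) hposΓ)))
  | andR c Γ A B hpa hpb iha ihb =>
      intro hc hcl hpos
      obtain ⟨hclA, hclΓ⟩ := closedSeq_insert_elim hcl
      obtain ⟨hposA, hposΓ⟩ := positive_insert_elim hpos
      exact OmDerAux.andR false Γ A B
        (iha hc (closedSeq_insert (closedF_and_elim hclA).1 hclΓ)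
          (positive_insert (posF_and_left hposA) hposΓ))
        (ihb hc (closedSeq_insert (closedF_and_elim hclA).2 hclΓ)
          (positive_insert (posF_and_right hposA) hposΓ))
  | boxR c Γ S A hp ih =>
      intro hc hcl hpos
      obtain ⟨hcl', hpos'⟩ := boxR_premise_cond hcl hpos
      exact OmDerAux.boxR false Γ S A (ih hc hcl' hpos')
  | clo c Γ A hp ih =>
      intro hc hcl hpos
      obtain ⟨hclA, hclΓ⟩ := closedSeq_insert_elim hcl
      obtain ⟨hposA, hposΓ⟩ := positive_insert_elim hpos
      exact OmDerAux.clo false Γ A (ih hc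
        (closedSeq_insert (Form.closedF_subst (closedF_mu' A)) hclΓ)
        (positive_insert (posF_clo hposA) hposΓ))
  | nuR c Γ A hp ih =>
      intro hc hcl hpos
      obtain ⟨hclA, hclΓ⟩ := closedSeq_insert_elim hcl
      obtain ⟨hposA, hposΓ⟩ := positive_insert_elim hpos
      exact OmDerAux.nuR false Γ A (fun i => ih i hc
        (closedSeq_insert (Form.closedF_iter A i) hclΓ)
        (positive_insert (posF_iter (posF_nu hposA) i) hposΓ))
  | cut Γ A hL0 hcl hlev hp1 hp2 ih1 ih2 =>
      intro hc; exact absurd hc (by simp)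
  | omega c Γ A h h1 hk hL0 hlev hpr ih =>
      intro hc hcl hpos
      have hn1 : 1 ≤ n := le_trans h1 hk
      have hlevA : A.lev + 1 = h := lev_prime_compl_mu hlev
      obtain ⟨_, hclΓ⟩ := closedSeq_insert_elim hcl
      obtain ⟨_, hposΓ⟩ := positive_insert_elim hpos
      refine OmDerAux.omega false Γ A h h1 (by omega) hL0 hlev ?_
      intro Δ hclΔ hposΔ hprev
      rw [prevOf_succ] at hprev
      have hlow := Lih false _ hprev rfl
        (closedSeq_insert (closedF_prime_mu A) hclΔ)
        (positive_insert (posF_prime_mu (by simpa using (by omega : A.lev < n)))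
          (positive_mono (by omega) hposΔ))
      rw [← prevOf_eq_of_pos hn1] at hlow
      exact ih Δ hclΔ hposΔ hlow hc (closedSeq_union hclΔ hclΓ)
        (positive_union (positive_mono (by omega) hposΔ) hposΓ)
  | omegaT c Γ A h h1 hk hL0 hlev hp1 hpr ih1 ih =>
      intro hc hcl hpos
      have hn1 : 1 ≤ n := le_trans h1 hk
      have hlevA : A.lev + 1 = h := lev_prime_compl_mu hlev
      refine OmDerAux.omegaT false Γ A h h1 (by omega) hL0 hlev ?_ ?_
      · exact ih1 hc (closedSeq_insert (closedF_prime_mu A) hcl)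
          (positive_insert (posF_prime_mu (by simpa using (by omega : A.lev < n + 1))) hpos)
      · intro Δ hclΔ hposΔ hprev
        rw [prevOf_succ] at hprev
        have hlow := Lih false _ hprev rfl
          (closedSeq_insert (closedF_prime_mu A) hclΔ)
          (positive_insert (posF_prime_mu (by simpa using (by omega : A.lev < n)))
            (positive_mono (by omega) hposΔ))
        rw [← prevOf_eq_of_pos hn1] at hlow
        exact ih Δ hclΔ hposΔ hlow hc (closedSeq_union hclΔ hcl)
          (positive_union (positive_mono (by omega) hposΔ) hpos)

/-- Lowering the stage by one, given raising at the previous stage. -/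
lemma Lstep (n : ℕ)
    (Rih : ∀ (c : Bool) (Th : Sequent), OmDerAux (prevOf (n - 1)) (n - 1) c Th → c = false →
      ClosedSeq Th → Positive n Th → OmDerAux (prevOf n) n false Th) :
    ∀ (c : Bool) (Th : Sequent), OmDerAux (prevOf (n + 1)) (n + 1) c Th → c = false →
      ClosedSeq Th → Positive (n + 1) Th → OmDerAux (prevOf n) n false Th := by
  intro c Th d
  induction d with
  | ax c Γ i => intro _ _ _; exact OmDerAux.ax false Γ i
  | orR c Γ A B hp ih =>
      intro hc hcl hpos
      obtain ⟨hclA, hclΓ⟩ := closedSeq_insert_elim hcl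
      obtain ⟨hposA, hposΓ⟩ := positive_insert_elim hpos
      exact OmDerAux.orR false Γ A B (ih hc
        (closedSeq_insert (closedF_or_elim hclA).1
          (closedSeq_insert (closedF_or_elim hclA).2 hclΓ))
        (positive_insert (posF_or_left hposA)
          (positive_insert (posF_or_right hposA) hposΓ)))
  | andR c Γ A B hpa hpb iha ihb =>
      intro hc hcl hpos
      obtain ⟨hclA, hclΓ⟩ := closedSeq_insert_elim hcl
      obtain ⟨hposA, hposΓ⟩ := positive_insert_elim hpos
      exact OmDerAux.andR false Γ A B
        (iha hc (closedSeq_insert (closedF_and_elim hclA).1 hclΓ)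
          (positive_insert (posF_and_left hposA) hposΓ))
        (ihb hc (closedSeq_insert (closedF_and_elim hclA).2 hclΓ)
          (positive_insert (posF_and_right hposA) hposΓ))
  | boxR c Γ S A hp ih =>
      intro hc hcl hpos
      obtain ⟨hcl', hpos'⟩ := boxR_premise_cond hcl hpos
      exact OmDerAux.boxR false Γ S A (ih hc hcl' hpos')
  | clo c Γ A hp ih =>
      intro hc hcl hpos
      obtain ⟨hclA, hclΓ⟩ := closedSeq_insert_elim hcl
      obtain ⟨hposA, hposΓ⟩ := positive_insert_elim hpos
      exact OmDerAux.clo false Γ A (ih hc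
        (closedSeq_insert (Form.closedF_subst (closedF_mu' A)) hclΓ)
        (positive_insert (posF_clo hposA) hposΓ))
  | nuR c Γ A hp ih =>
      intro hc hcl hpos
      obtain ⟨hclA, hclΓ⟩ := closedSeq_insert_elim hcl
      obtain ⟨hposA, hposΓ⟩ := positive_insert_elim hpos
      exact OmDerAux.nuR false Γ A (fun i => ih i hc
        (closedSeq_insert (Form.closedF_iter A i) hclΓ)
        (positive_insert (posF_iter (posF_nu hposA) i) hposΓ))
  | cut Γ A hL0 hcl hlev hp1 hp2 ih1 ih2 =>
      intro hc; exact absurd hc (by simp)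
  | omega c Γ A h h1 hk hL0 hlev hpr ih =>
      intro hc hcl hpos
      have hlevA : A.lev + 1 = h := lev_prime_compl_mu hlev
      obtain ⟨hposP, hposΓ⟩ := positive_insert_elim hpos
      obtain ⟨_, hclΓ⟩ := closedSeq_insert_elim hcl
      have hh : h ≤ n := by
        have := posF_prime_compl_mu_self hposP
        omega
      have hn1 : 1 ≤ n := le_trans h1 hh
      refine OmDerAux.omega false Γ A h h1 hh hL0 hlev ?_
      intro Δ hclΔ hposΔ hprev
      rw [prevOf_eq_of_pos hn1] at hprev
      have hup := Rih false _ hprev rfl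
        (closedSeq_insert (closedF_prime_mu A) hclΔ)
        (positive_insert (posF_prime_mu (by simpa using (by omega : A.lev < n)))
          (positive_mono hh hposΔ))
      rw [← prevOf_succ] at hup
      exact ih Δ hclΔ hposΔ hup hc (closedSeq_union hclΔ hclΓ)
        (positive_union (positive_mono (by omega) hposΔ) hposΓ)
  | omegaT c Γ A h h1 hk hL0 hlev hp1 hpr ih1 ih =>
      intro hc hcl hpos
      have hlevA : A.lev + 1 = h := lev_prime_compl_mu hlev
      by_cases hh : h ≤ n
      · have hn1 : 1 ≤ n := le_trans h1 hh
        refine OmDerAux.omegaT false Γ A h h1 hh hL0 hlev ?_ ?_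
        · exact ih1 hc (closedSeq_insert (closedF_prime_mu A) hcl)
            (positive_insert (posF_prime_mu (by simpa using (by omega : A.lev < n + 1))) hpos)
        · intro Δ hclΔ hposΔ hprev
          rw [prevOf_eq_of_pos hn1] at hprev
          have hup := Rih false _ hprev rfl
            (closedSeq_insert (closedF_prime_mu A) hclΔ)
            (positive_insert (posF_prime_mu (by simpa using (by omega : A.lev < n)))
              (positive_mono hh hposΔ))
          rw [← prevOf_succ] at hup
          exact ih Δ hclΔ hposΔ hup hc (closedSeq_union hclΔ hcl)
            (positive_union (positive_mono (by omega) hposΔ) hpos)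
      · have hh1 : h = n + 1 := by omega
        have V : OmDerAux (prevOf n) n false (insert (Form.prime (Form.mu A)) Γ) :=
          ih1 hc (closedSeq_insert (closedF_prime_mu A) hcl)
            (positive_insert (posF_prime_mu (by simpa using (by omega : A.lev < n + 1))) hpos)
        have hprev : prevOf (n + 1) (insert (Form.prime (Form.mu A)) Γ) := by
          rw [prevOf_succ]; exact V
        have hres := ih Γ hcl (positive_mono (by omega) hpos) hprev hc
          (closedSeq_union hcl hcl) (positive_union hpos hpos)
        rwa [Finset.union_self] at hres

/-- Shifting a cut-free derivation of a positive closed sequent one stage up or down. -/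
theorem shift : ∀ n : ℕ,
    (∀ (c : Bool) (Th : Sequent), OmDerAux (prevOf n) n c Th → c = false →
      ClosedSeq Th → Positive (n + 1) Th → OmDerAux (prevOf (n + 1)) (n + 1) false Th)
    ∧ (∀ (c : Bool) (Th : Sequent), OmDerAux (prevOf (n + 1)) (n + 1) c Th → c = false →
      ClosedSeq Th → Positive (n + 1) Th → OmDerAux (prevOf n) n false Th) := by
  intro n
  induction n using Nat.strong_induction_on with
  | _ n IH =>
    have hL : ∀ (c : Bool) (Th : Sequent), OmDerAux (prevOf n) n c Th → c = false →
        ClosedSeq Th → Positive n Th → OmDerAux (prevOf (n - 1)) (n - 1) false Th := by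
      cases n with
      | zero => intro c Th d hc _ _; exact hc ▸ d
      | succ m =>
          intro c Th d hc hcl hpos
          exact (IH m (by omega)).2 c Th d hc hcl hpos
    have hR : ∀ (c : Bool) (Th : Sequent), OmDerAux (prevOf (n - 1)) (n - 1) c Th → c = false →
        ClosedSeq Th → Positive n Th → OmDerAux (prevOf n) n false Th := by
      cases n with
      | zero => intro c Th d hc _ _; exact hc ▸ d
      | succ m =>
          intro c Th d hc hcl hpos
          exact (IH m (by omega)).1 c Th d hc hcl (positive_mono (by omega) hpos)
    exact ⟨Rstep n hL, Lstep n hR⟩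


/-! ### The identity-expansion and approximation lemmas -/

lemma insert_swap (a b : Form) (Γ : Sequent) :
    insert a (insert b Γ) = insert b (insert a Γ) := by
  ext x; simp; try tauto

lemma insert_rot (a b c : Form) (Γ : Sequent) :
    insert a (insert b (insert c Γ)) = insert c (insert a (insert b Γ)) := by
  ext x; simp; try tauto

lemma positive_empty {h : ℕ} : Positive h (∅ : Sequent) := by
  intro C hC; exact absurd hC (Finset.notMem_empty C)

lemma closedSeq_empty : ClosedSeq (∅ : Sequent) := by
  intro C hC; exact absurd hC (Finset.notMem_empty C)

/-- Lifting the proviso of the `Ω`-rules one stage up. -/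
lemma prev_lift {m h : ℕ} {A1 : Form} {Δ Γ : Sequent}
    (hlev : A1.lev < m) (hh : h ≤ m)
    (hclΔ : ClosedSeq Δ) (hposΔ : Positive h Δ)
    (hprev : prevOf m (insert (Form.mu A1).prime Δ)) :
    OmDerAux (prevOf m) m false (Δ ∪ insert (Form.mu A1).prime Γ) := by
  cases m with
  | zero => exact absurd hprev (by simp [prevOf])
  | succ m₀ =>
      rw [prevOf_succ] at hprev
      have hs := (shift m₀).1 false _ hprev rfl
        (closedSeq_insert (closedF_prime_mu A1) hclΔ)
        (positive_insert (posF_prime_mu hlev) (positive_mono (by omega) hposΔ))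
      refine weaken hs ?_
      intro x hx
      rcases Finset.mem_insert.1 hx with rfl | hx
      · exact Finset.mem_union_right _ (Finset.mem_insert_self _ _)
      · exact Finset.mem_union_left _ hx

lemma expansion (m : ℕ) (B C : Form)
    (Hyp : ∀ Γ : Sequent, OmDerAux (prevOf m) m false (insert B.prime (insert C.prime Γ))) :
    ∀ A : Form, A.IsL0 → A.lev ≤ m → ∀ Γ : Sequent,
      OmDerAux (prevOf m) m false
        (insert (A.subst B).prime (insert (A.compl.subst C).prime Γ)) := by
  intro A
  induction A with
  | atom i =>
      intro _ _ Γ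
      simp only [Form.subst, Form.compl, Form.prime]
      exact OmDerAux.ax false Γ i
  | natom i =>
      intro _ _ Γ
      simp only [Form.subst, Form.compl, Form.prime]
      rw [insert_swap]
      exact OmDerAux.ax false Γ i
  | var =>
      intro _ _ Γ
      simp only [Form.subst, Form.compl]
      exact Hyp Γ
  | and A1 A2 ih1 ih2 =>
      intro hL0 hlev Γ
      simp only [Form.IsL0] at hL0
      simp only [Form.lev] at hlev
      simp only [Form.subst, Form.compl, Form.prime]
      rw [insert_swap]
      apply OmDerAux.orR
      rw [insert_rot]
      apply OmDerAux.andR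
      · exact ih1 hL0.1 (by omega) _
      · have hd := ih2 hL0.2 (by omega) (insert (A1.compl.subst C).prime Γ)
        rwa [insert_swap ((A2.compl.subst C).prime) ((A1.compl.subst C).prime)] at hd
  | or A1 A2 ih1 ih2 =>
      intro hL0 hlev Γ
      simp only [Form.IsL0] at hL0
      simp only [Form.lev] at hlev
      simp only [Form.subst, Form.compl, Form.prime]
      apply OmDerAux.orR
      rw [insert_rot]
      apply OmDerAux.andR
      · have hd := ih1 hL0.1 (by omega) (insert (A2.subst B).prime Γ)
        rwa [insert_swap] at hd
      · have hd := ih2 hL0.2 (by omega) (insert (A1.subst B).prime Γ)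
        rwa [show insert (A2.subst B).prime (insert (A2.compl.subst C).prime
                (insert (A1.subst B).prime Γ))
              = insert (A2.compl.subst C).prime (insert (A1.subst B).prime
                (insert (A2.subst B).prime Γ)) from by ext x; simp; try tauto] at hd
  | box A1 ih =>
      intro hL0 hlev Γ
      simp only [Form.IsL0] at hL0
      simp only [Form.lev] at hlev
      simp only [Form.subst, Form.compl, Form.prime]
      have hp := ih hL0 hlev (∅ : Sequent)
      have hcon := OmDerAux.boxR (prev := prevOf m) (k := m) false
        (insert (A1.compl.subst C).prime ∅) Γ (A1.subst B).prime hp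
      rwa [show (insert (A1.compl.subst C).prime (∅ : Sequent)).image Form.dia
              ∪ insert (Form.box (A1.subst B).prime) Γ
            = insert (Form.box (A1.subst B).prime)
                (insert (Form.dia (A1.compl.subst C).prime) Γ) from by
          ext x; simp; try tauto] at hcon
  | dia A1 ih =>
      intro hL0 hlev Γ
      simp only [Form.IsL0] at hL0
      simp only [Form.lev] at hlev
      simp only [Form.subst, Form.compl, Form.prime]
      have hp := ih hL0 hlev (∅ : Sequent)
      rw [insert_swap] at hp
      have hcon := OmDerAux.boxR (prev := prevOf m) (k := m) false
        (insert (A1.subst B).prime ∅) Γ (A1.compl.subst C).prime hp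
      rwa [show (insert (A1.subst B).prime (∅ : Sequent)).image Form.dia
              ∪ insert (Form.box (A1.compl.subst C).prime) Γ
            = insert (Form.dia (A1.subst B).prime)
                (insert (Form.box (A1.compl.subst C).prime) Γ) from by
        ext x; simp; try tauto] at hcon
  | mu A1 ih =>
      intro hL0 hlev Γ
      have hL1 : A1.IsL0 := by simpa [Form.IsL0] using hL0
      have hlev1 : A1.lev + 1 ≤ m := by simpa [Form.lev] using hlev
      simp only [Form.subst]
      have hcon := OmDerAux.omega (prev := prevOf m) (k := m) false
        (insert (Form.mu A1).prime Γ) A1 (A1.lev + 1) (by omega) (by omega) hL1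
        (by simp [Form.prime, Form.compl, Form.lev])
        (fun Δ hclΔ hposΔ hprev => prev_lift (by omega) (by omega) hclΔ hposΔ hprev)
      rw [insert_swap] at hcon
      exact hcon
  | nu A1 ih =>
      intro hL0 hlev Γ
      have hL1 : A1.IsL0 := by simpa [Form.IsL0] using hL0
      have hlev1 : A1.lev + 1 ≤ m := by simpa [Form.lev] using hlev
      simp only [Form.subst]
      have hcon := OmDerAux.omega (prev := prevOf m) (k := m) false
        (insert (Form.mu A1.compl).prime Γ) A1.compl (A1.lev + 1) (by omega)
        (by omega) (Form.isL0_compl hL1)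
        (by simp [Form.prime, Form.compl, Form.lev])
        (fun Δ hclΔ hposΔ hprev => prev_lift
          (by simpa using (by omega : A1.lev < m)) (by omega) hclΔ hposΔ hprev)
      have hrw : Form.prime (Form.compl (Form.mu A1.compl)) = (Form.nu A1).prime := by
        simp [Form.compl, Form.prime, Form.compl_compl hL1]
      rw [hrw] at hcon
      exact hcon
  | nut A1 ih =>
      intro hL0
      exact absurd hL0 (by simp [Form.IsL0])

/-- Approximation: `Γ, (μX.B)', ((¬B)^i(⊤))'` is cut-free derivable. -/
lemma approx (m : ℕ) (B : Form) (hB : B.IsL0) (hlevB : B.lev ≤ m) :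
    ∀ (i : ℕ) (Γ : Sequent),
      OmDerAux (prevOf m) m false
        (insert (Form.mu B).prime (insert (Form.iter B.compl i).prime Γ)) := by
  intro i
  induction i with
  | zero =>
      intro Γ
      have hd : OmDerAux (prevOf m) m false
          (insert (Form.or (Form.atom 0) (Form.natom 0)) (insert (Form.mu B).prime Γ)) := by
        apply OmDerAux.orR
        exact OmDerAux.ax false _ 0
      rw [insert_swap] at hd
      exact hd
  | succ n ihn =>
      intro Γ
      refine OmDerAux.clo false _ B.prime ?_
      have he := expansion m (Form.mu B) (Form.iter B.compl n) ihn B hB hlevB Γ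
      simp only [Form.prime_subst] at he
      show OmDerAux (prevOf m) m false
        (insert (B.prime.subst (Form.mu B.prime)) (insert (Form.iter B.compl (n+1)).prime Γ))
      simp only [Form.iter, Form.prime_subst] at he ⊢
      exact he

/-- The proviso of the `Ω`-rules holds for the approximations. -/
lemma approx_prevOf {k : ℕ} {B : Form} (hB : B.IsL0) (hlev : B.lev + 1 ≤ k) (i : ℕ) :
    prevOf k (insert (Form.mu B).prime (insert (Form.iter B.compl i).prime ∅)) := by
  cases k with
  | zero => omega
  | succ k₀ =>
      rw [prevOf_succ]
      exact approx k₀ B hB (by omega) i ∅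


/-! ### Set-manipulation helpers for the main lemma -/

lemma good_subset {k : ℕ} {Δ Δ' : Sequent} (h : Δ' ⊆ Δ)
    (H : ∀ D ∈ Δ, D.IsL0 ∧ D.lev ≤ k) : ∀ D ∈ Δ', D.IsL0 ∧ D.lev ≤ k :=
  fun D hD => H D (h hD)

lemma good_insert {k : ℕ} {Δ : Sequent} {A : Form} (hA : A.IsL0) (hlev : A.lev ≤ k)
    (H : ∀ D ∈ Δ, D.IsL0 ∧ D.lev ≤ k) : ∀ D ∈ insert A Δ, D.IsL0 ∧ D.lev ≤ k := by
  intro D hD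
  rcases Finset.mem_insert.1 hD with rfl | hD
  · exact ⟨hA, hlev⟩
  · exact H D hD

lemma union_sdiff_insert_not_mem {Δt Γ : Sequent} {f : Form}
    (h : f ∉ Δt.image Form.prime) :
    Δt ∪ (insert f Γ \ Δt.image Form.prime)
      = insert f (Δt ∪ (Γ \ Δt.image Form.prime)) := by
  ext x
  simp only [Finset.mem_union, Finset.mem_sdiff, Finset.mem_insert]
  constructor
  · rintro (hx | ⟨(rfl | hx), hx2⟩)
    · exact Or.inr (Or.inl hx)
    · exact Or.inl rfl
    · exact Or.inr (Or.inr ⟨hx, hx2⟩)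
  · rintro (rfl | hx | ⟨hx, hx2⟩)
    · exact Or.inr ⟨Or.inl rfl, h⟩
    · exact Or.inl hx
    · exact Or.inr ⟨Or.inr hx, hx2⟩

lemma side_subset₁ {Δt Γ Θ : Sequent} {f : Form} (hΓΘ : Γ ⊆ Θ) :
    Δt ∪ (insert f Γ \ Δt.image Form.prime)
      ⊆ insert f (Δt ∪ (Θ \ Δt.image Form.prime)) := by
  intro x hx
  rcases Finset.mem_union.1 hx with hx | hx
  · exact Finset.mem_insert_of_mem (Finset.mem_union_left _ hx)
  · obtain ⟨hx1, hx2⟩ := Finset.mem_sdiff.1 hx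
    rcases Finset.mem_insert.1 hx1 with rfl | hx1
    · exact Finset.mem_insert_self _ _
    · exact Finset.mem_insert_of_mem
        (Finset.mem_union_right _ (Finset.mem_sdiff.2 ⟨hΓΘ hx1, hx2⟩))

lemma side_subset₂ {Δt Γ Θ : Sequent} {f₁ f₂ : Form} (hΓΘ : Γ ⊆ Θ) :
    Δt ∪ (insert f₁ (insert f₂ Γ) \ Δt.image Form.prime)
      ⊆ insert f₁ (insert f₂ (Δt ∪ (Θ \ Δt.image Form.prime))) := by
  intro x hx
  rcases Finset.mem_union.1 hx with hx | hx
  · exact Finset.mem_insert_of_mem (Finset.mem_insert_of_mem (Finset.mem_union_left _ hx))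
  · obtain ⟨hx1, hx2⟩ := Finset.mem_sdiff.1 hx
    rcases Finset.mem_insert.1 hx1 with rfl | hx1
    · exact Finset.mem_insert_self _ _
    rcases Finset.mem_insert.1 hx1 with rfl | hx1
    · exact Finset.mem_insert_of_mem (Finset.mem_insert_self _ _)
    · exact Finset.mem_insert_of_mem (Finset.mem_insert_of_mem
        (Finset.mem_union_right _ (Finset.mem_sdiff.2 ⟨hΓΘ hx1, hx2⟩)))

lemma side_subset_union {Δt Γ Δ : Sequent} :
    Δt ∪ ((Δ ∪ Γ) \ Δt.image Form.prime)
      ⊆ Δ ∪ (Δt ∪ (Γ \ Δt.image Form.prime)) := by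
  intro x hx
  rcases Finset.mem_union.1 hx with hx | hx
  · exact Finset.mem_union_right _ (Finset.mem_union_left _ hx)
  · obtain ⟨hx1, hx2⟩ := Finset.mem_sdiff.1 hx
    rcases Finset.mem_union.1 hx1 with hx1 | hx1
    · exact Finset.mem_union_left _ hx1
    · exact Finset.mem_union_right _
        (Finset.mem_union_right _ (Finset.mem_sdiff.2 ⟨hx1, hx2⟩))

lemma track_subset₁ {Δt Γ Θ : Sequent} {d f : Form}
    (hpr : d.prime = f) (hΓΘ : Γ ⊆ Θ) :
    (insert d Δt) ∪ (insert f Γ \ (insert d Δt).image Form.prime)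
      ⊆ insert d (Δt ∪ (Θ \ Δt.image Form.prime)) := by
  intro x hx
  rcases Finset.mem_union.1 hx with hx | hx
  · rcases Finset.mem_insert.1 hx with rfl | hx
    · exact Finset.mem_insert_self _ _
    · exact Finset.mem_insert_of_mem (Finset.mem_union_left _ hx)
  · obtain ⟨hx1, hx2⟩ := Finset.mem_sdiff.1 hx
    have hxf : x ≠ f := by
      rintro rfl
      exact hx2 (Finset.mem_image.2 ⟨d, Finset.mem_insert_self _ _, hpr⟩)
    have hxΓ : x ∈ Γ := by
      rcases Finset.mem_insert.1 hx1 with rfl | hx1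
      · exact absurd rfl hxf
      · exact hx1
    have hxP : x ∉ Δt.image Form.prime := fun hc =>
      hx2 (Finset.image_subset_image (Finset.subset_insert _ _) hc)
    exact Finset.mem_insert_of_mem (Finset.mem_union_right _
      (Finset.mem_sdiff.2 ⟨hΓΘ hxΓ, hxP⟩))

lemma track_subset₂ {Δt Γ Θ : Sequent} {d₁ d₂ f₁ f₂ : Form}
    (hpr1 : d₁.prime = f₁) (hpr2 : d₂.prime = f₂) (hΓΘ : Γ ⊆ Θ) :
    (insert d₁ (insert d₂ Δt))
        ∪ (insert f₁ (insert f₂ Γ) \ (insert d₁ (insert d₂ Δt)).image Form.prime)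
      ⊆ insert d₁ (insert d₂ (Δt ∪ (Θ \ Δt.image Form.prime))) := by
  intro x hx
  rcases Finset.mem_union.1 hx with hx | hx
  · rcases Finset.mem_insert.1 hx with rfl | hx
    · exact Finset.mem_insert_self _ _
    rcases Finset.mem_insert.1 hx with rfl | hx
    · exact Finset.mem_insert_of_mem (Finset.mem_insert_self _ _)
    · exact Finset.mem_insert_of_mem (Finset.mem_insert_of_mem (Finset.mem_union_left _ hx))
  · obtain ⟨hx1, hx2⟩ := Finset.mem_sdiff.1 hx
    have hxf1 : x ≠ f₁ := by
      rintro rfl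
      exact hx2 (Finset.mem_image.2 ⟨d₁, Finset.mem_insert_self _ _, hpr1⟩)
    have hxf2 : x ≠ f₂ := by
      rintro rfl
      exact hx2 (Finset.mem_image.2
        ⟨d₂, Finset.mem_insert_of_mem (Finset.mem_insert_self _ _), hpr2⟩)
    have hxΓ : x ∈ Γ := by
      rcases Finset.mem_insert.1 hx1 with rfl | hx1
      · exact absurd rfl hxf1
      rcases Finset.mem_insert.1 hx1 with rfl | hx1
      · exact absurd rfl hxf2
      · exact hx1
    have hxP : x ∉ Δt.image Form.prime := fun hc =>
      hx2 (Finset.image_subset_image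
        ((Finset.subset_insert _ _).trans (Finset.subset_insert _ _)) hc)
    exact Finset.mem_insert_of_mem (Finset.mem_insert_of_mem
      (Finset.mem_union_right _ (Finset.mem_sdiff.2 ⟨hΓΘ hxΓ, hxP⟩)))

lemma track_subset_omega {Δt Γ Θ : Sequent} {d : Form} (hΓΘ : Γ ⊆ Θ) :
    (insert d Δt) ∪ ((insert d.prime ∅ ∪ Γ) \ (insert d Δt).image Form.prime)
      ⊆ insert d (Δt ∪ (Θ \ Δt.image Form.prime)) := by
  intro x hx
  rcases Finset.mem_union.1 hx with hx | hx
  · rcases Finset.mem_insert.1 hx with rfl | hx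
    · exact Finset.mem_insert_self _ _
    · exact Finset.mem_insert_of_mem (Finset.mem_union_left _ hx)
  · obtain ⟨hx1, hx2⟩ := Finset.mem_sdiff.1 hx
    rcases Finset.mem_union.1 hx1 with hx1 | hx1
    · rcases Finset.mem_insert.1 hx1 with rfl | hx1
      · exact absurd (Finset.mem_image.2 ⟨d, Finset.mem_insert_self _ _, rfl⟩) hx2
      · exact absurd hx1 (Finset.notMem_empty x)
    · have hxP : x ∉ Δt.image Form.prime := fun hc =>
        hx2 (Finset.image_subset_image (Finset.subset_insert _ _) hc)
      exact Finset.mem_insert_of_mem (Finset.mem_union_right _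
        (Finset.mem_sdiff.2 ⟨hΓΘ hx1, hxP⟩))

lemma erase_track_subset {Δt Γ : Sequent} (A0 : Form) :
    (Δt.erase A0) ∪ (insert A0.prime Γ \ (Δt.erase A0).image Form.prime)
      ⊆ insert A0.prime (Δt ∪ (Γ \ Δt.image Form.prime)) := by
  intro x hx
  rcases Finset.mem_union.1 hx with hx | hx
  · exact Finset.mem_insert_of_mem (Finset.mem_union_left _ (Finset.mem_of_mem_erase hx))
  · obtain ⟨hx1, hx2⟩ := Finset.mem_sdiff.1 hx
    rcases Finset.mem_insert.1 hx1 with rfl | hx1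
    · exact Finset.mem_insert_self _ _
    · by_cases hxP : x ∈ Δt.image Form.prime
      · obtain ⟨D, hD, hpr⟩ := Finset.mem_image.1 hxP
        by_cases hDA : D = A0
        · subst hDA
          exact hpr ▸ Finset.mem_insert_self _ _
        · exact absurd (Finset.mem_image.2 ⟨D, Finset.mem_erase.2 ⟨hDA, hD⟩, hpr⟩) hx2
      · exact Finset.mem_insert_of_mem (Finset.mem_union_right _
          (Finset.mem_sdiff.2 ⟨hx1, hxP⟩))


/-! ### The main unpriming lemma -/

theorem unprime_main (k : ℕ) :
    ∀ {c : Bool} {Θ : Sequent}, OmDerAux (prevOf k) k c Θ →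
      ∀ Δt : Sequent, (∀ D ∈ Δt, D.IsL0 ∧ D.lev ≤ k) →
        OmDerAux (prevOf k) k c (Δt ∪ (Θ \ Δt.image Form.prime)) := by
  intro c Θ d
  induction d with
  | ax c Γ i =>
      intro Δt hG
      set T := Δt ∪ ((insert (Form.atom i) (insert (Form.natom i) Γ)) \ Δt.image Form.prime)
        with hT
      have hat : Form.atom i ∈ T := by
        by_cases hmem : Form.atom i ∈ Δt.image Form.prime
        · obtain ⟨D, hD, hpr⟩ := Finset.mem_image.1 hmem
          have hDa : D = Form.atom i := prime_eq_atom hpr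
          exact Finset.mem_union_left _ (hDa ▸ hD)
        · exact Finset.mem_union_right _
            (Finset.mem_sdiff.2 ⟨Finset.mem_insert_self _ _, hmem⟩)
      have hnat : Form.natom i ∈ T := by
        by_cases hmem : Form.natom i ∈ Δt.image Form.prime
        · obtain ⟨D, hD, hpr⟩ := Finset.mem_image.1 hmem
          have hDa : D = Form.natom i := prime_eq_natom hpr
          exact Finset.mem_union_left _ (hDa ▸ hD)
        · exact Finset.mem_union_right _
            (Finset.mem_sdiff.2
              ⟨Finset.mem_insert_of_mem (Finset.mem_insert_self _ _), hmem⟩)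
      have h2 := OmDerAux.ax (prev := prevOf k) (k := k) c T i
      rwa [Finset.insert_eq_self.2 hnat, Finset.insert_eq_self.2 hat] at h2
  | orR c Γ A B hp ih =>
      intro Δt hG
      by_cases hmem : Form.or A B ∈ Δt.image Form.prime
      · obtain ⟨D, hD, hpr⟩ := Finset.mem_image.1 hmem
        obtain ⟨D₁, D₂, rfl, h1, h2⟩ := prime_eq_or hpr
        have hGD := hG _ hD
        set T := Δt ∪ ((insert (Form.or A B) Γ) \ Δt.image Form.prime) with hT
        have hmemT : Form.or D₁ D₂ ∈ T := Finset.mem_union_left _ hD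
        rw [← Finset.insert_eq_self.2 hmemT]
        apply OmDerAux.orR c T D₁ D₂
        have hprem := ih (insert D₁ (insert D₂ Δt))
          (good_insert hGD.1.1 (le_trans (le_max_left _ _) hGD.2)
            (good_insert hGD.1.2 (le_trans (le_max_right _ _) hGD.2) hG))
        exact weaken hprem (track_subset₂ h1 h2 (Finset.subset_insert _ _))
      · rw [union_sdiff_insert_not_mem hmem]
        apply OmDerAux.orR
        exact weaken (ih Δt hG) (side_subset₂ (Finset.Subset.refl Γ))
  | andR c Γ A B hpa hpb iha ihb =>
      intro Δt hG
      by_cases hmem : Form.and A B ∈ Δt.image Form.prime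
      · obtain ⟨D, hD, hpr⟩ := Finset.mem_image.1 hmem
        obtain ⟨D₁, D₂, rfl, h1, h2⟩ := prime_eq_and hpr
        have hGD := hG _ hD
        set T := Δt ∪ ((insert (Form.and A B) Γ) \ Δt.image Form.prime) with hT
        have hmemT : Form.and D₁ D₂ ∈ T := Finset.mem_union_left _ hD
        rw [← Finset.insert_eq_self.2 hmemT]
        apply OmDerAux.andR c T D₁ D₂
        · have hprem := iha (insert D₁ Δt)
            (good_insert hGD.1.1 (le_trans (le_max_left _ _) hGD.2) hG)
          exact weaken hprem (track_subset₁ h1 (Finset.subset_insert _ _))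
        · have hprem := ihb (insert D₂ Δt)
            (good_insert hGD.1.2 (le_trans (le_max_right _ _) hGD.2) hG)
          exact weaken hprem (track_subset₁ h2 (Finset.subset_insert _ _))
      · rw [union_sdiff_insert_not_mem hmem]
        apply OmDerAux.andR
        · exact weaken (iha Δt hG) (side_subset₁ (Finset.Subset.refl Γ))
        · exact weaken (ihb Δt hG) (side_subset₁ (Finset.Subset.refl Γ))
  | clo c Γ F hp ih =>
      intro Δt hG
      by_cases hmem : Form.mu F ∈ Δt.image Form.prime
      · obtain ⟨D, hD, hpr⟩ := Finset.mem_image.1 hmem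
        obtain ⟨D₁, rfl, h1⟩ := prime_eq_mu hpr
        have hGD := hG _ hD
        have hlevD : D₁.lev + 1 ≤ k := hGD.2
        set T := Δt ∪ ((insert (Form.mu F) Γ) \ Δt.image Form.prime) with hT
        have hmemT : Form.mu D₁ ∈ T := Finset.mem_union_left _ hD
        rw [← Finset.insert_eq_self.2 hmemT]
        apply OmDerAux.clo c T D₁
        have hprE : (D₁.subst (Form.mu D₁)).prime = F.subst (Form.mu F) := by
          simp [Form.prime_subst, Form.prime, h1]
        have hprem := ih (insert (D₁.subst (Form.mu D₁)) Δt)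
          (good_insert (Form.isL0_subst hGD.1 hGD.1)
            (le_trans (Form.lev_subst_le _ _) (by simp [Form.lev]; omega)) hG)
        exact weaken hprem (track_subset₁ hprE (Finset.subset_insert _ _))
      · rw [union_sdiff_insert_not_mem hmem]
        apply OmDerAux.clo
        exact weaken (ih Δt hG) (side_subset₁ (Finset.Subset.refl Γ))
  | nuR c Γ F hp ih =>
      intro Δt hG
      have hmem : Form.nu F ∉ Δt.image Form.prime := by
        intro hc
        obtain ⟨D, hD, hpr⟩ := Finset.mem_image.1 hc
        exact prime_ne_nu hpr
      rw [union_sdiff_insert_not_mem hmem]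
      apply OmDerAux.nuR
      intro i
      exact weaken (ih i Δt hG) (side_subset₁ (Finset.Subset.refl Γ))
  | cut Γ A hL0 hcl hlev hp1 hp2 ih1 ih2 =>
      intro Δt hG
      apply OmDerAux.cut _ A hL0 hcl hlev
      · exact weaken (ih1 (Δt.erase A) (good_subset (Finset.erase_subset _ _) hG))
          (erase_track_subset A)
      · exact weaken (ih2 (Δt.erase A.compl) (good_subset (Finset.erase_subset _ _) hG))
          (erase_track_subset A.compl)
  | omega c Γ A h h1 hk hL0 hlev hpr ih =>
      intro Δt hG
      have hlevA : A.lev + 1 = h := lev_prime_compl_mu hlev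
      by_cases hmem : Form.prime (Form.compl (Form.mu A)) ∈ Δt.image Form.prime
      · obtain ⟨D, hD, hpr'⟩ := Finset.mem_image.1 hmem
        have hpr'' : D.prime = Form.nut A.compl.prime := by
          simpa [Form.compl, Form.prime] using hpr'
        obtain ⟨D₁, rfl, hD₁⟩ := prime_eq_nut (hG _ hD).1 hpr''
        have hD₁L0 : D₁.IsL0 := (hG _ hD).1
        have hD₁eq : D₁ = A.compl := Form.prime_inj hD₁L0 (Form.isL0_compl hL0) hD₁
        subst hD₁eq
        set T := Δt ∪
          ((insert (Form.prime (Form.compl (Form.mu A))) Γ) \ Δt.image Form.prime) with hT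
        have hmemT : Form.nu A.compl ∈ T := Finset.mem_union_left _ hD
        rw [← Finset.insert_eq_self.2 hmemT]
        apply OmDerAux.nuR c T A.compl
        intro i
        have hΔcl : ClosedSeq (insert (Form.iter A.compl i).prime ∅) :=
          closedSeq_insert (Form.closedF_prime (Form.closedF_iter _ _)) closedSeq_empty
        have hΔpos : Positive h (insert (Form.iter A.compl i).prime ∅) := by
          refine positive_insert (posF_of_lev_lt ?_) positive_empty
          have := Form.lev_iter_le A.compl i
          simp only [Form.lev_prime, Form.lev_compl] at this ⊢
          omega
        have hprev : prevOf k
            (insert (Form.mu A).prime (insert (Form.iter A.compl i).prime ∅)) :=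
          approx_prevOf hL0 (by omega) i
        have hdd := ih _ hΔcl hΔpos hprev (insert (Form.iter A.compl i) Δt)
          (good_insert (Form.isL0_iter (Form.isL0_compl hL0) i)
            (le_trans (Form.lev_iter_le _ _) (by simp only [Form.lev_compl]; omega)) hG)
        exact weaken hdd (track_subset_omega (Finset.subset_insert _ _))
      · rw [union_sdiff_insert_not_mem hmem]
        refine OmDerAux.omega c _ A h h1 hk hL0 hlev ?_
        intro Δ hcl hpos hprev
        exact weaken (ih Δ hcl hpos hprev Δt hG) side_subset_union
  | omegaT c Γ A h h1 hk hL0 hlev hp1 hpr ih1 ih =>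
      intro Δt hG
      refine OmDerAux.omegaT c _ A h h1 hk hL0 hlev ?_ ?_
      · exact weaken (ih1 (Δt.erase (Form.mu A)) (good_subset (Finset.erase_subset _ _) hG))
          (erase_track_subset (Form.mu A))
      · intro Δ hcl hpos hprev
        exact weaken (ih Δ hcl hpos hprev Δt hG) side_subset_union
  | boxR c Γ S A hp ih =>
      intro Δt hG
      have key : ∀ x ∈ Δt.image Form.prime, x.unprime ∈ Δt ∧ x.unprime.prime = x := by
        intro x hx
        obtain ⟨D, hD, hpr⟩ := Finset.mem_image.1 hx
        subst hpr
        rw [Form.unprime_prime (hG D hD).1]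
        exact ⟨hD, rfl⟩
      have keyDia : ∀ C : Form, Form.dia C ∈ Δt.image Form.prime →
          (Form.unprime C).prime = C := by
        intro C hC
        have h2 := (key _ hC).2
        simpa [Form.unprime, Form.prime] using h2
      set T := Δt ∪ ((Γ.image Form.dia ∪ insert (Form.box A) S) \ Δt.image Form.prime)
        with hT
      set Δf := (Γ.filter (fun C => Form.dia C ∈ Δt.image Form.prime)).image Form.unprime
        with hΔf
      set Γu := Γ.image
        (fun C => if Form.dia C ∈ Δt.image Form.prime then C.unprime else C) with hΓu
      have goodF : ∀ y ∈ Δf, y.IsL0 ∧ y.lev ≤ k := by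
        intro y hy
        obtain ⟨C, hC, rfl⟩ := Finset.mem_image.1 hy
        obtain ⟨hCΓ, hCP⟩ := Finset.mem_filter.1 hC
        have hmem := (key _ hCP).1
        have h2 := hG _ hmem
        exact ⟨h2.1, h2.2⟩
      have hdiaT : ∀ C ∈ Γ, Form.dia C ∉ Δt.image Form.prime → Form.dia C ∈ T := by
        intro C hC hCP
        refine Finset.mem_union_right _ (Finset.mem_sdiff.2 ⟨?_, hCP⟩)
        exact Finset.mem_union_left _ (Finset.mem_image_of_mem _ hC)
      have himg : Γu.image Form.dia ⊆ T := by
        intro y hy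
        obtain ⟨z, hz, rfl⟩ := Finset.mem_image.1 hy
        obtain ⟨C, hC, rfl⟩ := Finset.mem_image.1 hz
        by_cases hCP : Form.dia C ∈ Δt.image Form.prime
        · simp only [if_pos hCP]
          exact Finset.mem_union_left _ ((key _ hCP).1)
        · simp only [if_neg hCP]
          exact hdiaT C hC hCP
      by_cases hbox : Form.box A ∈ Δt.image Form.prime
      · have hbm : Form.box A.unprime ∈ Δt := (key _ hbox).1
        have hbg := hG _ hbm
        have hApr : A.unprime.prime = A := by
          have h2 := (key _ hbox).2
          simpa [Form.unprime, Form.prime] using h2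
        have hprem := ih (insert A.unprime Δf) (good_insert hbg.1 hbg.2 goodF)
        have hsub : (insert A.unprime Δf)
            ∪ (insert A Γ \ (insert A.unprime Δf).image Form.prime)
            ⊆ insert A.unprime Γu := by
          intro x hx
          rcases Finset.mem_union.1 hx with hx | hx
          · rcases Finset.mem_insert.1 hx with rfl | hx
            · exact Finset.mem_insert_self _ _
            · obtain ⟨C, hC, rfl⟩ := Finset.mem_image.1 hx
              obtain ⟨hCΓ, hCP⟩ := Finset.mem_filter.1 hC
              exact Finset.mem_insert_of_mem
                (Finset.mem_image.2 ⟨C, hCΓ, by simp [hCP]⟩)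
          · obtain ⟨hx1, hx2⟩ := Finset.mem_sdiff.1 hx
            rcases Finset.mem_insert.1 hx1 with rfl | hx1
            · exact absurd
                (Finset.mem_image.2 ⟨x.unprime, Finset.mem_insert_self _ _, hApr⟩) hx2
            · by_cases hdC : Form.dia x ∈ Δt.image Form.prime
              · refine absurd (Finset.mem_image.2 ⟨x.unprime, ?_, keyDia x hdC⟩) hx2
                exact Finset.mem_insert_of_mem
                  (Finset.mem_image.2 ⟨x, Finset.mem_filter.2 ⟨hx1, hdC⟩, rfl⟩)
              · exact Finset.mem_insert_of_mem (Finset.mem_image.2 ⟨x, hx1, by simp [hdC]⟩)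
        have hpw := weaken hprem hsub
        have hcon := OmDerAux.boxR (prev := prevOf k) (k := k) c Γu T A.unprime hpw
        have hb : Form.box A.unprime ∈ T := Finset.mem_union_left _ hbm
        rwa [Finset.insert_eq_self.2 hb, Finset.union_eq_right.2 himg] at hcon
      · have hprem := ih Δf goodF
        have hsub : Δf ∪ (insert A Γ \ Δf.image Form.prime) ⊆ insert A Γu := by
          intro x hx
          rcases Finset.mem_union.1 hx with hx | hx
          · obtain ⟨C, hC, rfl⟩ := Finset.mem_image.1 hx
            obtain ⟨hCΓ, hCP⟩ := Finset.mem_filter.1 hC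
            exact Finset.mem_insert_of_mem
              (Finset.mem_image.2 ⟨C, hCΓ, by simp [hCP]⟩)
          · obtain ⟨hx1, hx2⟩ := Finset.mem_sdiff.1 hx
            rcases Finset.mem_insert.1 hx1 with rfl | hx1
            · exact Finset.mem_insert_self _ _
            · by_cases hdC : Form.dia x ∈ Δt.image Form.prime
              · refine absurd (Finset.mem_image.2 ⟨x.unprime, ?_, keyDia x hdC⟩) hx2
                exact Finset.mem_image.2 ⟨x, Finset.mem_filter.2 ⟨hx1, hdC⟩, rfl⟩
              · exact Finset.mem_insert_of_mem (Finset.mem_image.2 ⟨x, hx1, by simp [hdC]⟩)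
        have hpw := weaken hprem hsub
        have hcon := OmDerAux.boxR (prev := prevOf k) (k := k) c Γu T A hpw
        have hb : Form.box A ∈ T := by
          refine Finset.mem_union_right _ (Finset.mem_sdiff.2 ⟨?_, hbox⟩)
          exact Finset.mem_union_right _ (Finset.mem_insert_self _ _)
        rwa [Finset.insert_eq_self.2 hb, Finset.union_eq_right.2 himg] at hcon


/-- for `h ≤ k`, if `A` is a formula of `L0` with `lev(A) = h` and
`Γ, Aʹ` is cut-free derivable in `M^Ω_k`, then so is `Γ, A`. -/
theorem stmt2 (h k : ℕ) (hhk : h ≤ k) (A : Form)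
    (hA : A.IsL0) (hAc : A.ClosedF) (hlev : A.lev = h)
    (Γ : Sequent) (hΓ : ClosedSeq Γ)
    (hd : OmProv k false (insert A.prime Γ)) :
    OmProv k false (insert A Γ) := by
  rw [omProv_def] at hd ⊢
  have hm := unprime_main k hd {A}
    (by intro D hD; rcases Finset.mem_singleton.1 hD with rfl; exact ⟨hA, by omega⟩)
  refine weaken hm ?_
  intro x hx
  rcases Finset.mem_union.1 hx with hx | hx
  · rcases Finset.mem_singleton.1 hx with rfl
    exact Finset.mem_insert_self _ _
  · obtain ⟨hx1, hx2⟩ := Finset.mem_sdiff.1 hx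
    rcases Finset.mem_insert.1 hx1 with rfl | hx1
    · exact absurd (Finset.mem_image.2 ⟨A, Finset.mem_singleton_self _, rfl⟩) hx2
    · exact Finset.mem_insert_of_mem hx1

end OneVarMu
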